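/- arXiv:1712.04333 — 4 statements merged into one kernel-verified Lean document; each statement's English description precedes it below -/
import Mathlib

section
/- The function g(t) = ǧ₂ − ϑ − 2ϑ(ǧ₂ − ϑ)/(e^{ω(T−t)}(ǧ₂ + ϑ) − ǧ₂ + ϑ) is differentiable on [0,T] and solves the Riccati equation g'(t) − 2γ₂ g(t) + γ₁ g(t)² + γ₃ = 0 for every t ∈ [0,T], with the terminal condition g(T) = 0. -/
open Real MeasureTheory Set Filter

noncomputable section

/-- `γ₁ = σ²/(1-γ)`. -/
def gam1 (σ γ : ℝ) : ℝ := σ ^ 2 / (1 - γ)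

/-- `γ₂ = γκ₁/(1-γ) + κ` with `κ₁ = κ + r`. -/
def gam2 (κ σ r γ : ℝ) : ℝ := γ * (κ + r) / (1 - γ) + κ

/-- `γ₃ = γκ₁²/((1-γ)σ²)`. -/
def gam3 (κ σ r γ : ℝ) : ℝ := γ * (κ + r) ^ 2 / ((1 - γ) * σ ^ 2)

/-- `ǧ₂ = γ₂/γ₁`. -/
def gc2 (κ σ r γ : ℝ) : ℝ := gam2 κ σ r γ / gam1 σ γ

/-- `ǧ₃ = γ₃/γ₁`. -/
def gc3 (κ σ r γ : ℝ) : ℝ := gam3 κ σ r γ / gam1 σ γ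

/-- `ϑ = √(ǧ₂² − ǧ₃)`. -/
def theta (κ σ r γ : ℝ) : ℝ := Real.sqrt (gc2 κ σ r γ ^ 2 - gc3 κ σ r γ)

/-- The explicit solution `g(t)` of the Riccati equation; `ω = 2ϑγ₁`. -/
def gfun (κ σ r γ T t : ℝ) : ℝ :=
  gc2 κ σ r γ - theta κ σ r γ -
    2 * theta κ σ r γ * (gc2 κ σ r γ - theta κ σ r γ) /
      (Real.exp (2 * theta κ σ r γ * gam1 σ γ * (T - t)) * (gc2 κ σ r γ + theta κ σ r γ) -
        gc2 κ σ r γ + theta κ σ r γ)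

/-- `g₁(t) = γ₁ g(t) − γ₂`. -/
def g1fun (κ σ r γ T t : ℝ) : ℝ := gam1 σ γ * gfun κ σ r γ T t - gam2 κ σ r γ

/-- `μ(u,t) = exp(∫_t^u g₁(v) dv)`. -/
def mufun (κ σ r γ T u t : ℝ) : ℝ := Real.exp (∫ v in t..u, g1fun κ σ r γ T v)

/-- `σ₁(u,t) = √(σ² ∫_t^u μ(u,z)² dz)`. -/
def sig1fun (κ σ r γ T u t : ℝ) : ℝ :=
  Real.sqrt (σ ^ 2 * ∫ z in t..u, mufun κ σ r γ T u z ^ 2)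

/-- The Gaussian kernel `φ(s,t,z,u)`. -/
def phifun (κ σ r γ T s t z u : ℝ) : ℝ :=
  (Real.sqrt (2 * Real.pi) * sig1fun κ σ r γ T u t)⁻¹ *
    Real.exp (-(z - s * mufun κ σ r γ T u t) ^ 2 / (2 * sig1fun κ σ r γ T u t ^ 2))

/-- `G(s,t,y) = exp(−(s²g(t)/2 + y)/(1−γ))`. -/
def Gfun (κ σ r γ T s t y : ℝ) : ℝ :=
  Real.exp (-(s ^ 2 * gfun κ σ r γ T t / 2 + y) / (1 - γ))

/-- `Γ₀(s,t,y₁,y₂)`. -/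
def Gamma0 (κ σ r γ ϖ T s t y₁ y₂ : ℝ) : ℝ :=
  σ ^ 2 * y₂ ^ 2 / (2 * (1 - γ)) + σ ^ 2 * gfun κ σ r γ T t / 2 + r * γ +
    (1 - γ) * ϖ ^ (1 / (γ - 1)) * Gfun κ σ r γ T s t y₁

/-- `Ψ_h(s,t) = Γ₀(s,t,h(s,t),∂_s h(s,t))`. -/
def Psifun (κ σ r γ ϖ T : ℝ) (h : ℝ → ℝ → ℝ) (s t : ℝ) : ℝ :=
  Gamma0 κ σ r γ ϖ T s t (h s t) (deriv (fun s' => h s' t) s)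

/-- The Feynman–Kac mapping `ℒ_h(s,t) = ∫_t^T ∫_ℝ Ψ_h(z,u) φ(s,t,z,u) dz du`. -/
def FK (κ σ r γ ϖ T : ℝ) (h : ℝ → ℝ → ℝ) (s t : ℝ) : ℝ :=
  ∫ u in t..T, ∫ z : ℝ, Psifun κ σ r γ ϖ T h z u * phifun κ σ r γ T s t z u

/-- The bound `B₁`. -/
def Bb1 (σ γ ϖ T : ℝ) : ℝ :=
  (1 - γ) / σ ^ 2 *
    (Real.sqrt (Real.pi / (2 * T)) +
      Real.sqrt (|Real.pi - 4 * T * σ ^ 2 * ϖ ^ (1 / (γ - 1))| / (2 * T)))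

/-- The bound `B₀`. -/
def Bb0 (κ σ r γ ϖ T : ℝ) : ℝ :=
  (gfun κ σ r γ T 0 * σ ^ 2 / 2 + r * γ + (1 - γ) * ϖ ^ (1 / (γ - 1)) +
    gam1 σ γ / 2 * Bb1 σ γ ϖ T ^ 2) * T

/-- Membership in the space `𝒳`. -/
def MemX (κ σ r γ ϖ T : ℝ) (h : ℝ → ℝ → ℝ) : Prop :=
  ContinuousOn (fun p : ℝ × ℝ => h p.1 p.2) (Set.univ ×ˢ Set.Icc 0 T) ∧
  (∀ t ∈ Set.Icc (0 : ℝ) T, ∀ s : ℝ, DifferentiableAt ℝ (fun s' => h s' t) s) ∧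
  ContinuousOn (fun p : ℝ × ℝ => deriv (fun s' => h s' p.2) p.1) (Set.univ ×ˢ Set.Icc 0 T) ∧
  ∀ s : ℝ, ∀ t ∈ Set.Icc (0 : ℝ) T,
    0 ≤ h s t ∧ h s t ≤ Bb0 κ σ r γ ϖ T ∧ |deriv (fun s' => h s' t) s| ≤ Bb1 σ γ ϖ T

/-- The metric `ρ_κ̂` on `𝒳`. -/
def rhoX (T kh : ℝ) (f h : ℝ → ℝ → ℝ) : ℝ :=
  ⨆ p : ℝ × Set.Icc (0 : ℝ) T,
    Real.exp (-kh * (T - (p.2 : ℝ))) *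
      (|h p.1 (p.2 : ℝ) - f p.1 (p.2 : ℝ)| +
        |deriv (fun s' => h s' (p.2 : ℝ)) p.1 - deriv (fun s' => f s' (p.2 : ℝ)) p.1|)

/-- The Picard iterates `h₀ = 0`, `h_{n+1} = ℒ_{h_n}`. -/
def picard (κ σ r γ ϖ T : ℝ) : ℕ → ℝ → ℝ → ℝ
  | 0 => fun _ _ => 0
  | n + 1 => FK κ σ r γ ϖ T (picard κ σ r γ ϖ T n)

/-- `g` is differentiable on `[0,T]`, solves the Riccati equation
`g'(t) − 2γ₂ g(t) + γ₁ g(t)² + γ₃ = 0` there, and `g(T) = 0`. -/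
theorem g_solves_riccati (κ σ r γ ϖ T : ℝ)
    (hκ : 0 < κ) (hσ : 0 < σ) (hr0 : 0 ≤ r) (hrκ : r ≤ κ)
    (hγ0 : 0 < γ) (hγ1 : γ < 1) (hϖ : 0 < ϖ) (hT : 0 < T) :
    (∀ t ∈ Set.Icc (0 : ℝ) T,
      HasDerivAt (fun t' => gfun κ σ r γ T t')
        (2 * gam2 κ σ r γ * gfun κ σ r γ T t - gam1 σ γ * gfun κ σ r γ T t ^ 2 -
          gam3 κ σ r γ) t) ∧
    gfun κ σ r γ T T = 0 := by
  have hγ1' : (0:ℝ) < 1 - γ := by linarith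
  have hσ2 : (0:ℝ) < σ ^ 2 := by positivity
  have hg1 : 0 < gam1 σ γ := by unfold gam1; positivity
  set a := gc2 κ σ r γ with ha_def
  have ha : a = (κ + γ * r) / σ ^ 2 := by
    rw [ha_def]; unfold gc2 gam2 gam1; field_simp; ring
  have hg3 : gc3 κ σ r γ = γ * (κ + r) ^ 2 / σ ^ 4 := by
    unfold gc3 gam3 gam1; field_simp
  have ha0 : 0 < a := by rw [ha]; positivity
  have key : 0 < (κ + γ * r) ^ 2 - γ * (κ + r) ^ 2 := by
    nlinarith [mul_pos (mul_pos hγ1' hγ1') (mul_pos hκ hκ),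
      mul_nonneg (mul_nonneg hγ0.le hγ1'.le)
        (sub_nonneg.mpr (mul_le_mul hrκ hrκ hr0 hκ.le))]
  have hdisc : 0 < a ^ 2 - gc3 κ σ r γ := by
    have h1 : a ^ 2 - gc3 κ σ r γ = ((κ + γ * r) ^ 2 - γ * (κ + r) ^ 2) / σ ^ 4 := by
      rw [ha, hg3]; field_simp
    rw [h1]; positivity
  set θ := theta κ σ r γ with hθ_def
  have hθ : 0 < θ := by rw [hθ_def]; exact Real.sqrt_pos.mpr hdisc
  have hθsq : θ ^ 2 = a ^ 2 - gc3 κ σ r γ := by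
    rw [hθ_def]; exact Real.sq_sqrt hdisc.le
  set g1 := gam1 σ γ with hg1_def
  have hγ2 : gam2 κ σ r γ = g1 * a := by
    rw [ha_def, hg1_def]; unfold gc2; field_simp
    exact (mul_div_cancel_right₀ _ hg1.ne').symm
  have hγ3 : gam3 κ σ r γ = g1 * (a ^ 2 - θ ^ 2) := by
    have : gc3 κ σ r γ = a ^ 2 - θ ^ 2 := by rw [hθsq]; ring
    have h2 : gam3 κ σ r γ = g1 * gc3 κ σ r γ := by
      rw [hg1_def]; unfold gc3; field_simp
      exact (mul_div_cancel_right₀ _ hg1.ne').symm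
    rw [h2, this]
  constructor
  · intro t ht
    obtain ⟨ht0, htT⟩ := ht
    have hE : (0:ℝ) < Real.exp (2 * θ * g1 * (T - t)) := Real.exp_pos _
    have hE1 : (1:ℝ) ≤ Real.exp (2 * θ * g1 * (T - t)) :=
      Real.one_le_exp (by nlinarith [mul_nonneg (mul_pos hθ hg1).le (sub_nonneg.mpr htT)])
    have hD : 0 < Real.exp (2 * θ * g1 * (T - t)) * (a + θ) - a + θ := by
      nlinarith
    have hDder : HasDerivAt
        (fun t' => Real.exp (2 * θ * g1 * (T - t')) * (a + θ) - a + θ)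
        (Real.exp (2 * θ * g1 * (T - t)) * (2 * θ * g1 * (-1)) * (a + θ)) t := by
      have h1 : HasDerivAt (fun t' : ℝ => 2 * θ * g1 * (T - t')) (2 * θ * g1 * (-1)) t := by
        simpa using ((hasDerivAt_id t).const_sub T).const_mul (2 * θ * g1)
      exact ((h1.exp.mul_const (a + θ)).sub_const a).add_const θ
    have hNder :=
      ((hasDerivAt_const t (2 * θ * (a - θ))).div hDder hD.ne').const_sub (a - θ)
    have hfun : (fun t' => gfun κ σ r γ T t') =
        (fun t' => a - θ - 2 * θ * (a - θ) /
          (Real.exp (2 * θ * g1 * (T - t')) * (a + θ) - a + θ)) := by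
      funext t'; rw [gfun, ← ha_def, ← hθ_def, ← hg1_def]
    rw [hfun]
    convert hNder using 1
    · rfl
    · rfl
    · rfl
    rw [gfun, ← ha_def, ← hθ_def, ← hg1_def, hγ2, hγ3]
    generalize Real.exp (2 * θ * g1 * (T - t)) = X at hD ⊢
    have hDne := hD.ne'
    field_simp
    ring
  · rw [gfun, ← ha_def, ← hθ_def, ← hg1_def]
    simp only [sub_self, mul_zero, Real.exp_zero, one_mul]
    field_simp
    rw [show a + θ - a + θ = θ * 2 by ring, div_self (mul_pos hθ two_pos).ne']
    ring
end
end

section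
/- For all 0 ≤ t₁ ≤ t₂ ≤ T one has g(t₂) ≤ g(t₁) (g is decreasing, so max_{0≤t≤T} g(t) = g(0)); moreover 0 ≤ g(t) ≤ ǧ₂ − ϑ for every t ∈ [0,T], and consequently g₁(t) = γ₁ g(t) − γ₂ ≤ −γ₁ϑ < 0 for every t ∈ [0,T]. -/
open Real MeasureTheory Set Filter

noncomputable section

/-- `g` is decreasing on `[0,T]`, satisfies `0 ≤ g(t) ≤ ǧ₂ − ϑ`, and
consequently `g₁(t) = γ₁ g(t) − γ₂ ≤ −γ₁ϑ < 0` on `[0,T]`. -/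
theorem g_decreasing_and_bounds (κ σ r γ ϖ T : ℝ)
    (hκ : 0 < κ) (hσ : 0 < σ) (hr0 : 0 ≤ r) (hrκ : r ≤ κ)
    (hγ0 : 0 < γ) (hγ1 : γ < 1) (hϖ : 0 < ϖ) (hT : 0 < T) :
    (∀ t₁ t₂ : ℝ, 0 ≤ t₁ → t₁ ≤ t₂ → t₂ ≤ T →
      gfun κ σ r γ T t₂ ≤ gfun κ σ r γ T t₁) ∧
    (∀ t ∈ Set.Icc (0 : ℝ) T,
      0 ≤ gfun κ σ r γ T t ∧ gfun κ σ r γ T t ≤ gc2 κ σ r γ - theta κ σ r γ) ∧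
    (∀ t ∈ Set.Icc (0 : ℝ) T,
      g1fun κ σ r γ T t ≤ -(gam1 σ γ * theta κ σ r γ) ∧
        -(gam1 σ γ * theta κ σ r γ) < 0) := by
  have ha : (0:ℝ) < 1 - γ := by linarith
  have hσ' : σ ≠ 0 := ne_of_gt hσ
  have hg1 : 0 < gam1 σ γ := by unfold gam1; positivity
  have hk1 : 0 < κ + r := by linarith
  have hgc2 : gc2 κ σ r γ = (γ*(κ+r) + κ*(1-γ))/σ^2 := by
    unfold gc2 gam2 gam1; field_simp
  have hgc3 : gc3 κ σ r γ = γ*(κ+r)^2/σ^4 := by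
    unfold gc3 gam3 gam1; field_simp
  have hgc2pos : 0 < gc2 κ σ r γ := by
    rw [hgc2]; apply div_pos _ (by positivity)
    nlinarith [mul_pos hγ0 hk1, mul_pos hκ ha]
  have hgc3pos : 0 < gc3 κ σ r γ := by
    rw [hgc3]; positivity
  have hdiff : 0 < gc2 κ σ r γ ^ 2 - gc3 κ σ r γ := by
    have key : gc2 κ σ r γ ^ 2 - gc3 κ σ r γ
        = ((1-γ)*(γ*(κ+r)*(κ-r) + κ^2*(1-γ)))/σ^4 := by
      rw [hgc2, hgc3]; field_simp; ring
    rw [key]; apply div_pos _ (by positivity)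
    have h1 : 0 ≤ γ*(κ+r)*(κ-r) := by
      apply mul_nonneg (mul_nonneg hγ0.le hk1.le); linarith
    nlinarith [mul_pos (mul_pos hκ hκ) ha]
  set θ := theta κ σ r γ with hθdef
  have hθ2 : θ^2 = gc2 κ σ r γ ^ 2 - gc3 κ σ r γ := Real.sq_sqrt hdiff.le
  have hθpos : 0 < θ := Real.sqrt_pos.mpr hdiff
  have hθlt : θ < gc2 κ σ r γ := by nlinarith
  set c2 := gc2 κ σ r γ with hc2def
  set D : ℝ → ℝ := fun t => Real.exp (2 * θ * gam1 σ γ * (T - t)) * (c2 + θ) - c2 + θ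
    with hDdef
  have hDval : ∀ t : ℝ, D t = Real.exp (2 * θ * gam1 σ γ * (T - t)) * (c2 + θ) - c2 + θ :=
    fun t => rfl
  have hgeq : ∀ t : ℝ, gfun κ σ r γ T t = (c2 - θ) - 2*θ*(c2-θ)/D t := fun t => rfl
  have hDlb : ∀ t : ℝ, t ≤ T → 2*θ ≤ D t := by
    intro t ht
    have h1 : (1:ℝ) ≤ Real.exp (2 * θ * gam1 σ γ * (T - t)) := by
      apply Real.one_le_exp
      have : 0 ≤ T - t := by linarith
      positivity
    have h2 : c2 + θ ≤ Real.exp (2 * θ * gam1 σ γ * (T - t)) * (c2 + θ) := by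
      nlinarith
    rw [hDval]; linarith
  have hDpos : ∀ t : ℝ, t ≤ T → 0 < D t := by
    intro t ht; have := hDlb t ht; linarith
  have hNnn : 0 ≤ 2*θ*(c2-θ) := by nlinarith
  have hbounds : ∀ t ∈ Set.Icc (0:ℝ) T,
      0 ≤ gfun κ σ r γ T t ∧ gfun κ σ r γ T t ≤ c2 - θ := by
    intro t ht
    have hDp := hDpos t ht.2
    have hDl := hDlb t ht.2
    constructor
    · rw [hgeq t, sub_nonneg, div_le_iff₀ hDp]
      nlinarith
    · rw [hgeq t]
      have : 0 ≤ 2*θ*(c2-θ)/D t := div_nonneg hNnn hDp.le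
      linarith
  refine ⟨?_, hbounds, ?_⟩
  · intro t₁ t₂ h0 h12 h2T
    rw [hgeq t₁, hgeq t₂]
    have hD21 : D t₂ ≤ D t₁ := by
      have : Real.exp (2 * θ * gam1 σ γ * (T - t₂))
          ≤ Real.exp (2 * θ * gam1 σ γ * (T - t₁)) := by
        apply Real.exp_le_exp.mpr
        have h0' : 0 ≤ 2 * θ * gam1 σ γ := by positivity
        exact mul_le_mul_of_nonneg_left (by linarith) h0'
      have h2 := mul_le_mul_of_nonneg_right this (show (0:ℝ) ≤ c2 + θ by linarith)
      rw [hDval, hDval]; linarith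
    have : 2*θ*(c2-θ)/D t₁ ≤ 2*θ*(c2-θ)/D t₂ := by
      apply div_le_div_of_nonneg_left hNnn (hDpos t₂ h2T) hD21
    linarith
  · intro t ht
    have hb := (hbounds t ht).2
    have hmul : gam1 σ γ * c2 = gam2 κ σ r γ := by
      simp only [hc2def]; unfold gc2; field_simp
    constructor
    · unfold g1fun
      have : gam1 σ γ * gfun κ σ r γ T t ≤ gam1 σ γ * (c2 - θ) :=
        mul_le_mul_of_nonneg_left hb hg1.le
      nlinarith
    · have : 0 < gam1 σ γ * θ := mul_pos hg1 hθpos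
      linarith
end
end

section
/- For all s ∈ ℝ and 0 ≤ t < u ≤ T, the total variation in z of the s-derivative of the Gaussian kernel satisfies ∫_ℝ |∂_s φ(s,t,z,u)| dz = √(2/π) · μ(u,t)/σ₁(u,t) ≤ √(2/π) · 1/(σ√(u−t)); in particular sup_{s∈ℝ} ∫_ℝ |∂_s φ(s,t,z,u)| dz ≤ c/√(u−t) with c = √(2/π)/σ. -/
open Real MeasureTheory Set Filter

noncomputable section

section AuxTV

variable {κ σ r γ T : ℝ}

lemma int_Ioi_mul_exp {b : ℝ} (hb : 0 < b) :
    ∫ x in Ioi (0:ℝ), x * Real.exp (-b * x ^ 2) = (2 * b)⁻¹ := by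
  have hderiv : ∀ x ∈ Ioi (0:ℝ),
      HasDerivAt (fun x : ℝ => -(2*b)⁻¹ * Real.exp (-b * x ^ 2))
        (x * Real.exp (-b * x ^ 2)) x := by
    intro x _
    have h1 : HasDerivAt (fun x : ℝ => -b * x ^ 2) (-b * (2 * x)) x := by
      simpa using ((hasDerivAt_pow 2 x).const_mul (-b))
    have h2 := (h1.exp).const_mul (-(2*b)⁻¹)
    convert h2 using 1
    · rfl
    · rfl
    field_simp
  have hcont : ContinuousWithinAt (fun x : ℝ => -(2*b)⁻¹ * Real.exp (-b * x ^ 2)) (Ici 0) 0 :=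
    (Continuous.continuousWithinAt (by fun_prop))
  have hint : IntegrableOn (fun x : ℝ => x * Real.exp (-b * x ^ 2)) (Ioi 0) :=
    (integrable_mul_exp_neg_mul_sq hb).integrableOn
  have htend : Tendsto (fun x : ℝ => -(2*b)⁻¹ * Real.exp (-b * x ^ 2)) atTop (nhds 0) := by
    have : Tendsto (fun x : ℝ => -b * x ^ 2) atTop atBot := by
      apply Tendsto.const_mul_atTop_of_neg (by linarith : -b < 0)
      exact tendsto_pow_atTop (by norm_num)
    simpa using (Real.tendsto_exp_atBot.comp this).const_mul (-(2*b)⁻¹)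
  have := MeasureTheory.integral_Ioi_of_hasDerivAt_of_tendsto hcont hderiv hint htend
  rw [this]
  simp

lemma int_abs_mul_exp {b : ℝ} (hb : 0 < b) :
    ∫ x : ℝ, |x| * Real.exp (-b * x ^ 2) = b⁻¹ := by
  have := integral_comp_abs (f := fun y : ℝ => y * Real.exp (-b * y ^ 2))
  simp only [sq_abs] at this
  rw [this, int_Ioi_mul_exp hb]
  rw [mul_inv]
  ring

lemma gam1_pos (hσ : 0 < σ) (hγ1 : γ < 1) : 0 < gam1 σ γ :=
  div_pos (by positivity) (by linarith)

lemma gam2_pos (hκ : 0 < κ) (hr0 : 0 ≤ r) (hγ0 : 0 < γ) (hγ1 : γ < 1) : 0 < gam2 κ σ r γ := by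
  have h1 : (0:ℝ) < 1 - γ := by linarith
  have : 0 ≤ γ * (κ + r) / (1 - γ) := div_nonneg (by positivity) h1.le
  unfold gam2; linarith

lemma gc2_pos (hκ : 0 < κ) (hσ : 0 < σ) (hr0 : 0 ≤ r) (hγ0 : 0 < γ) (hγ1 : γ < 1) :
    0 < gc2 κ σ r γ :=
  div_pos (gam2_pos hκ hr0 hγ0 hγ1) (gam1_pos hσ hγ1)

lemma theta_nonneg : 0 ≤ theta κ σ r γ := Real.sqrt_nonneg _

lemma theta_le_gc2 (hκ : 0 < κ) (hσ : 0 < σ) (hr0 : 0 ≤ r) (hγ0 : 0 < γ) (hγ1 : γ < 1) :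
    theta κ σ r γ ≤ gc2 κ σ r γ := by
  have hg3 : 0 ≤ gc3 κ σ r γ := by
    apply div_nonneg _ (gam1_pos hσ hγ1).le
    unfold gam3
    have h1 : (0:ℝ) < 1 - γ := by linarith
    exact div_nonneg (by positivity) (by positivity)
  calc theta κ σ r γ ≤ Real.sqrt (gc2 κ σ r γ ^ 2) :=
        Real.sqrt_le_sqrt (by linarith)
    _ = |gc2 κ σ r γ| := by rw [Real.sqrt_sq_eq_abs]
    _ = gc2 κ σ r γ := abs_of_pos (gc2_pos hκ hσ hr0 hγ0 hγ1)

lemma gam1_mul_gc2 (hσ : 0 < σ) (hγ1 : γ < 1) :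
    gam1 σ γ * gc2 κ σ r γ = gam2 κ σ r γ := by
  rw [gc2, mul_div_cancel₀ _ (gam1_pos hσ hγ1).ne']

lemma den_pos (hκ : 0 < κ) (hσ : 0 < σ) (hr0 : 0 ≤ r) (hγ0 : 0 < γ) (hγ1 : γ < 1)
    (hθ : 0 < theta κ σ r γ) {v : ℝ} (hv : v ≤ T) :
    0 < Real.exp (2 * theta κ σ r γ * gam1 σ γ * (T - v)) * (gc2 κ σ r γ + theta κ σ r γ) -
        gc2 κ σ r γ + theta κ σ r γ := by
  have h1 : (1:ℝ) ≤ Real.exp (2 * theta κ σ r γ * gam1 σ γ * (T - v)) := by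
    apply Real.one_le_exp
    have := gam1_pos hσ hγ1
    have : 0 ≤ T - v := by linarith
    positivity
  have h2 : 0 < gc2 κ σ r γ + theta κ σ r γ := by
    have := gc2_pos hκ hσ hr0 hγ0 hγ1; linarith
  nlinarith

lemma g1_nonpos (hκ : 0 < κ) (hσ : 0 < σ) (hr0 : 0 ≤ r) (hγ0 : 0 < γ) (hγ1 : γ < 1)
    {v : ℝ} (hv : v ≤ T) : g1fun κ σ r γ T v ≤ 0 := by
  have hγp := gam1_pos hσ hγ1
  have key : g1fun κ σ r γ T v = gam1 σ γ * (gfun κ σ r γ T v - gc2 κ σ r γ) := by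
    rw [mul_sub, gam1_mul_gc2 hσ hγ1, g1fun]
  rw [key]
  apply mul_nonpos_of_nonneg_of_nonpos hγp.le
  rcases eq_or_lt_of_le (theta_nonneg (κ := κ) (σ := σ) (r := r) (γ := γ)) with hθ | hθ
  · simp [gfun, ← hθ]
  · have hD := den_pos hκ hσ hr0 hγ0 hγ1 hθ hv
    have hnum : 0 ≤ 2 * theta κ σ r γ * (gc2 κ σ r γ - theta κ σ r γ) := by
      have := theta_le_gc2 hκ hσ hr0 hγ0 hγ1
      nlinarith
    have : 0 ≤ 2 * theta κ σ r γ * (gc2 κ σ r γ - theta κ σ r γ) /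
      (Real.exp (2 * theta κ σ r γ * gam1 σ γ * (T - v)) * (gc2 κ σ r γ + theta κ σ r γ) -
        gc2 κ σ r γ + theta κ σ r γ) := div_nonneg hnum hD.le
    rw [gfun]
    linarith

lemma g1_contOn (hκ : 0 < κ) (hσ : 0 < σ) (hr0 : 0 ≤ r) (hγ0 : 0 < γ) (hγ1 : γ < 1) :
    ContinuousOn (g1fun κ σ r γ T) (Iic T) := by
  unfold g1fun gfun
  apply ContinuousOn.sub _ continuousOn_const
  apply ContinuousOn.mul continuousOn_const
  rcases eq_or_lt_of_le (theta_nonneg (κ := κ) (σ := σ) (r := r) (γ := γ)) with hθ | hθ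
  · simp only [← hθ, mul_zero, zero_mul, zero_div, sub_zero]
    exact continuousOn_const
  · apply ContinuousOn.sub continuousOn_const
    apply ContinuousOn.div (by fun_prop) (by fun_prop)
    intro v hv
    exact (den_pos hκ hσ hr0 hγ0 hγ1 hθ hv).ne'

end AuxTV


/-- for all `s` and `0 ≤ t < u ≤ T`,
`∫_ℝ |∂_s φ(s,t,z,u)| dz = √(2/π) μ(u,t)/σ₁(u,t) ≤ √(2/π)/(σ√(u−t))`. -/
theorem total_variation_deriv_kernel (κ σ r γ ϖ T : ℝ)
    (hκ : 0 < κ) (hσ : 0 < σ) (hr0 : 0 ≤ r) (hrκ : r ≤ κ)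
    (hγ0 : 0 < γ) (hγ1 : γ < 1) (hϖ : 0 < ϖ) (hT : 0 < T) :
    ∀ s t u : ℝ, 0 ≤ t → t < u → u ≤ T →
      (∫ z : ℝ, |deriv (fun s' => phifun κ σ r γ T s' t z u) s|) =
        Real.sqrt (2 / Real.pi) * mufun κ σ r γ T u t / sig1fun κ σ r γ T u t ∧
      (∫ z : ℝ, |deriv (fun s' => phifun κ σ r γ T s' t z u) s|) ≤
        Real.sqrt (2 / Real.pi) / σ / Real.sqrt (u - t) := by
  intro s t u ht htu huT
  have hπ : (0:ℝ) < Real.pi := Real.pi_pos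
  have hg1cont : ContinuousOn (g1fun κ σ r γ T) (Iic T) := g1_contOn hκ hσ hr0 hγ0 hγ1
  have hsub : ∀ {a b : ℝ}, t ≤ a → b ≤ u → a ≤ b →
      IntervalIntegrable (g1fun κ σ r γ T) volume a b := by
    intro a b ha hb hab
    apply (hg1cont.mono ?_).intervalIntegrable
    rw [uIcc_of_le hab]
    exact fun x hx => le_trans (le_trans hx.2 hb) huT
  set μv := mufun κ σ r γ T u t with hμv
  have hμpos : 0 < μv := Real.exp_pos _
  have hμmono : ∀ z ∈ Icc t u, μv ≤ mufun κ σ r γ T u z := by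
    intro z hz
    rw [hμv]
    unfold mufun
    apply Real.exp_le_exp.mpr
    have hsplit := intervalIntegral.integral_add_adjacent_intervals
      (hsub le_rfl hz.2 hz.1) (hsub hz.1 le_rfl hz.2)
    have hneg : (∫ v in t..z, g1fun κ σ r γ T v) ≤ 0 := by
      have h := intervalIntegral.integral_mono_on (μ := volume) hz.1 (hsub le_rfl hz.2 hz.1)
        intervalIntegrable_const
        (fun x hx => g1_nonpos hκ hσ hr0 hγ0 hγ1 (le_trans (le_trans hx.2 hz.2) huT))
      simpa using h
    linarith
  have hmucont : ContinuousOn (fun z => mufun κ σ r γ T u z) (Icc t u) := by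
    have hprim : ContinuousOn (fun z => ∫ v in t..z, g1fun κ σ r γ T v) (Icc t u) := by
      have h := intervalIntegral.continuousOn_primitive_interval
        (a := t) (b := u) (f := g1fun κ σ r γ T) (μ := volume) ?_
      · rwa [uIcc_of_le htu.le] at h
      · rw [uIcc_of_le htu.le]
        exact (hg1cont.mono (fun x hx => le_trans hx.2 huT)).integrableOn_Icc
    have heq : ∀ z ∈ Icc t u, mufun κ σ r γ T u z
        = Real.exp ((∫ v in t..u, g1fun κ σ r γ T v) - ∫ v in t..z, g1fun κ σ r γ T v) := by
      intro z hz
      unfold mufun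
      congr 1
      have hsplit := intervalIntegral.integral_add_adjacent_intervals
        (hsub le_rfl hz.2 hz.1) (hsub hz.1 le_rfl hz.2)
      linarith
    exact ContinuousOn.congr
      (Real.continuous_exp.comp_continuousOn (continuousOn_const.sub hprim)) heq
  have hμ2int : IntervalIntegrable (fun z => mufun κ σ r γ T u z ^ 2) volume t u := by
    apply ContinuousOn.intervalIntegrable
    rw [uIcc_of_le htu.le]
    exact hmucont.pow 2
  have hIlb : (u - t) * μv ^ 2 ≤ ∫ z in t..u, mufun κ σ r γ T u z ^ 2 := by
    have h := intervalIntegral.integral_mono_on (μ := volume) htu.le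
      intervalIntegrable_const hμ2int
      (fun x hx => pow_le_pow_left₀ hμpos.le (hμmono x hx) 2)
    simpa [smul_eq_mul] using h
  set σ1 := sig1fun κ σ r γ T u t with hσ1def
  have hut : (0:ℝ) < u - t := by linarith
  have hInn : 0 < σ ^ 2 * ∫ z in t..u, mufun κ σ r γ T u z ^ 2 := by
    have h1 : 0 < (u - t) * μv ^ 2 := by positivity
    have h2 : (0:ℝ) < σ ^ 2 := by positivity
    nlinarith
  have hσ1pos : 0 < σ1 := by
    rw [hσ1def]; unfold sig1fun; exact Real.sqrt_pos.mpr hInn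
  have hlb : σ * Real.sqrt (u - t) * μv ≤ σ1 := by
    rw [hσ1def]
    unfold sig1fun
    rw [Real.le_sqrt (by positivity) hInn.le]
    have h1 : (Real.sqrt (u - t)) ^ 2 = u - t := Real.sq_sqrt hut.le
    have h2 : σ ^ 2 * ((u - t) * μv ^ 2) ≤ σ ^ 2 * ∫ z in t..u, mufun κ σ r γ T u z ^ 2 :=
      mul_le_mul_of_nonneg_left hIlb (by positivity)
    nlinarith
  have hb : (0:ℝ) < (2 * σ1 ^ 2)⁻¹ := by positivity
  have hd : ∀ z : ℝ, HasDerivAt (fun s' => phifun κ σ r γ T s' t z u)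
      ((Real.sqrt (2 * Real.pi) * σ1)⁻¹ *
        (Real.exp (-(z - s * μv) ^ 2 / (2 * σ1 ^ 2)) * (μv * (z - s * μv) / σ1 ^ 2))) s := by
    intro z
    have h0 : HasDerivAt (fun s' : ℝ => z - s' * μv) (-μv) s := by
      simpa using ((hasDerivAt_id s).mul_const μv).const_sub z
    have h1 : HasDerivAt (fun s' : ℝ => -(z - s' * μv) ^ 2 / (2 * σ1 ^ 2))
        (μv * (z - s * μv) / σ1 ^ 2) s := by
      have h := ((h0.pow 2).neg).div_const (2 * σ1 ^ 2)
      convert h using 1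
      · rfl
      · rfl
      · rfl
      field_simp
      ring
    exact (h1.exp).const_mul ((Real.sqrt (2 * Real.pi) * σ1)⁻¹)
  have heq1 : ∀ z : ℝ, |deriv (fun s' => phifun κ σ r γ T s' t z u) s|
      = ((Real.sqrt (2 * Real.pi) * σ1)⁻¹ * μv / σ1 ^ 2) *
        (|z - s * μv| * Real.exp (-(2 * σ1 ^ 2)⁻¹ * (z - s * μv) ^ 2)) := by
    intro z
    rw [(hd z).deriv]
    rw [abs_mul, abs_mul, abs_div, abs_mul]
    rw [abs_of_nonneg (by positivity : (0:ℝ) ≤ (Real.sqrt (2 * Real.pi) * σ1)⁻¹),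
        abs_of_nonneg (Real.exp_nonneg _), abs_of_pos hμpos,
        abs_of_nonneg (by positivity : (0:ℝ) ≤ σ1 ^ 2)]
    rw [show -(z - s * μv) ^ 2 / (2 * σ1 ^ 2) = -(2 * σ1 ^ 2)⁻¹ * (z - s * μv) ^ 2 by ring]
    ring
  have hA : (0:ℝ) < Real.sqrt (2 * Real.pi) := Real.sqrt_pos.mpr (by positivity)
  have h2pi : Real.sqrt (2 / Real.pi) = 2 / Real.sqrt (2 * Real.pi) := by
    rw [eq_div_iff hA.ne', ← Real.sqrt_mul (by positivity)]
    rw [show 2 / Real.pi * (2 * Real.pi) = 4 by field_simp; ring]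
    rw [show (4:ℝ) = 2 ^ 2 by norm_num, Real.sqrt_sq (by norm_num)]
  have heqInt : (∫ z : ℝ, |deriv (fun s' => phifun κ σ r γ T s' t z u) s|)
      = Real.sqrt (2 / Real.pi) * μv / σ1 := by
    simp_rw [heq1]
    rw [MeasureTheory.integral_const_mul]
    rw [show (∫ z : ℝ, |z - s * μv| * Real.exp (-(2 * σ1 ^ 2)⁻¹ * (z - s * μv) ^ 2))
        = ∫ x : ℝ, |x| * Real.exp (-(2 * σ1 ^ 2)⁻¹ * x ^ 2) from
      MeasureTheory.integral_sub_right_eq_self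
        (fun x : ℝ => |x| * Real.exp (-(2 * σ1 ^ 2)⁻¹ * x ^ 2)) (s * μv)]
    rw [int_abs_mul_exp hb, inv_inv, h2pi]
    field_simp
  refine ⟨heqInt, ?_⟩
  rw [heqInt]
  have hst : 0 < Real.sqrt (u - t) := Real.sqrt_pos.mpr hut
  have hrhs : Real.sqrt (2 / Real.pi) / σ / Real.sqrt (u - t)
      = Real.sqrt (2 / Real.pi) * μv / (σ * Real.sqrt (u - t) * μv) := by
    have h1 : σ ≠ 0 := hσ.ne'
    have h2 : Real.sqrt (u - t) ≠ 0 := hst.ne'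
    have h3 : μv ≠ 0 := hμpos.ne'
    field_simp
  rw [hrhs]
  gcongr
end
end

section
/- Suppose g : [0,T] → ℝ is differentiable, satisfies g'(t) − 2γ₂ g(t) + γ₁ g(t)² + γ₃ = 0 on [0,T] with g(T) = 0, and let g₁(t) = γ₁ g(t) − γ₂. Suppose Y : ℝ × [0,T] → ℝ is twice continuously differentiable in s and continuously differentiable in t, satisfies Y(s,T) = 0 for all s, and solves Y_t(s,t) + (σ²/2) Y_ss(s,t) + s g₁(t) Y_s(s,t) + Ψ_Y(s,t) = 0 on ℝ × [0,T]. Define z(x,s,t) = ϖ x^γ exp(s² g(t)/2 + Y(s,t)) for x > 0. Then z_xx(x,s,t) < 0 and z solves the HJB partial differential equation: z_t + (σ² z_xs − κ₁ s z_x)²/(2 σ² |z_xx|) + (σ²/2) z_ss + r x z_x − κ s z_s + (1−γ)(z_x/γ)^{γ/(γ−1)} = 0 for all x > 0, s ∈ ℝ, t ∈ [0,T], with terminal condition z(x,s,T) = ϖ x^γ. -/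
open Real MeasureTheory Set Filter

noncomputable section

set_option maxHeartbeats 2000000 in
/-- if `g` solves the Riccati equation with `g(T) = 0` and `Y` is a classical
solution of the semilinear PDE `Y_t + (σ²/2)Y_ss + s g₁(t) Y_s + Ψ_Y = 0`, `Y(s,T) = 0`,
then `z(x,s,t) = ϖ x^γ exp(s²g(t)/2 + Y(s,t))` has `z_xx < 0` and solves the HJB equation
with terminal condition `z(x,s,T) = ϖ x^γ`. -/
theorem z_solves_HJB (κ σ r γ ϖ T : ℝ)
    (hκ : 0 < κ) (hσ : 0 < σ) (hr0 : 0 ≤ r) (hrκ : r ≤ κ)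
    (hγ0 : 0 < γ) (hγ1 : γ < 1) (hϖ : 0 < ϖ) (hT : 0 < T)
    (g : ℝ → ℝ) (Y : ℝ → ℝ → ℝ)
    (hg : ∀ t ∈ Set.Icc (0 : ℝ) T,
      HasDerivAt g (2 * gam2 κ σ r γ * g t - gam1 σ γ * g t ^ 2 - gam3 κ σ r γ) t)
    (hgT : g T = 0)
    (hY1 : ∀ t ∈ Set.Icc (0 : ℝ) T, ∀ s : ℝ, DifferentiableAt ℝ (fun s' => Y s' t) s)
    (hY2 : ∀ t ∈ Set.Icc (0 : ℝ) T, ∀ s : ℝ,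
      DifferentiableAt ℝ (fun s' => deriv (fun s'' => Y s'' t) s') s)
    (hY1c : ContinuousOn (fun p : ℝ × ℝ => deriv (fun s' => Y s' p.2) p.1)
      (Set.univ ×ˢ Set.Icc 0 T))
    (hY2c : ContinuousOn
      (fun p : ℝ × ℝ => deriv (fun s' => deriv (fun s'' => Y s'' p.2) s') p.1)
      (Set.univ ×ˢ Set.Icc 0 T))
    (hYt : ∀ s : ℝ, ∀ t ∈ Set.Icc (0 : ℝ) T, DifferentiableAt ℝ (fun t' => Y s t') t)
    (hYtc : ContinuousOn (fun p : ℝ × ℝ => deriv (fun t' => Y p.1 t') p.2)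
      (Set.univ ×ˢ Set.Icc 0 T))
    (hYT : ∀ s : ℝ, Y s T = 0)
    (hPDE : ∀ s : ℝ, ∀ t ∈ Set.Icc (0 : ℝ) T,
      deriv (fun t' => Y s t') t +
          σ ^ 2 / 2 * deriv (fun s' => deriv (fun s'' => Y s'' t) s') s +
          s * (gam1 σ γ * g t - gam2 κ σ r γ) * deriv (fun s' => Y s' t) s +
          (σ ^ 2 * (deriv (fun s' => Y s' t) s) ^ 2 / (2 * (1 - γ)) + σ ^ 2 * g t / 2 +
            r * γ +
            (1 - γ) * ϖ ^ (1 / (γ - 1)) *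
              Real.exp (-(s ^ 2 * g t / 2 + Y s t) / (1 - γ))) = 0) :
    let z : ℝ → ℝ → ℝ → ℝ := fun x s t =>
      ϖ * x ^ γ * Real.exp (s ^ 2 * g t / 2 + Y s t)
    let zx : ℝ → ℝ → ℝ → ℝ := fun x s t => deriv (fun x' => z x' s t) x
    let zxx : ℝ → ℝ → ℝ → ℝ := fun x s t => deriv (fun x' => zx x' s t) x
    let zs : ℝ → ℝ → ℝ → ℝ := fun x s t => deriv (fun s' => z x s' t) s
    let zss : ℝ → ℝ → ℝ → ℝ := fun x s t => deriv (fun s' => zs x s' t) s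
    let zxs : ℝ → ℝ → ℝ → ℝ := fun x s t => deriv (fun s' => zx x s' t) s
    let zt : ℝ → ℝ → ℝ → ℝ := fun x s t => deriv (fun t' => z x s t') t
    ∀ x : ℝ, 0 < x → ∀ s : ℝ, ∀ t ∈ Set.Icc (0 : ℝ) T,
      zxx x s t < 0 ∧
      zt x s t +
          (σ ^ 2 * zxs x s t - (κ + r) * s * zx x s t) ^ 2 /
            (2 * σ ^ 2 * |zxx x s t|) +
          σ ^ 2 / 2 * zss x s t + r * x * zx x s t - κ * s * zs x s t +
          (1 - γ) * (zx x s t / γ) ^ (γ / (γ - 1)) = 0 ∧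
      z x s T = ϖ * x ^ γ := by
  have h1γ : (0:ℝ) < 1 - γ := by linarith
  have h1γne : (1:ℝ) - γ ≠ 0 := h1γ.ne'
  have hγ1ne : γ - 1 ≠ 0 := by linarith
  have hγne : γ ≠ 0 := hγ0.ne'
  have hσne : σ ≠ 0 := hσ.ne'
  intro z zx zxx zs zss zxs zt x hx s t ht
  have hxne : x ≠ 0 := hx.ne'
  set G := g t with hGdef
  set Ys := deriv (fun s' => Y s' t) s with hYsdef
  set Yss := deriv (fun s' => deriv (fun s'' => Y s'' t) s') s with hYssdef
  set Yt := deriv (fun t' => Y s t') t with hYtdef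
  set E := s ^ 2 * G / 2 + Y s t with hEdef
  set A := Real.exp E with hAdef
  have hApos : 0 < A := Real.exp_pos E
  have hXpos : (0:ℝ) < x ^ γ := Real.rpow_pos_of_pos hx γ
  have hXne : x ^ γ ≠ 0 := hXpos.ne'
  have hx1 : x ^ (γ - 1) = x ^ γ / x := by
    rw [Real.rpow_sub hx, Real.rpow_one]
  have hx2 : x ^ (γ - 2) = x ^ γ / x / x := by
    rw [show γ - 2 = γ - 1 - 1 by ring, Real.rpow_sub hx, Real.rpow_one, hx1]
  -- derivative in x, at any point x' > 0 and any (s', t')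
  have hzx_all : ∀ x' : ℝ, 0 < x' → ∀ s' t' : ℝ,
      zx x' s' t' = ϖ * (γ * x' ^ (γ - 1)) * Real.exp (s' ^ 2 * g t' / 2 + Y s' t') := by
    intro x' hx' s' t'
    exact (((Real.hasDerivAt_rpow_const (Or.inl hx'.ne')).const_mul ϖ).mul_const _).deriv
  have hzx : zx x s t = ϖ * (γ * (x ^ γ / x)) * A := by
    rw [hzx_all x hx s t, hx1]
  -- second derivative in x
  have hzxx : zxx x s t = ϖ * (γ * ((γ - 1) * (x ^ γ / x / x))) * A := by
    have hev : (fun x' => zx x' s t) =ᶠ[nhds x]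
        (fun x' => ϖ * (γ * x' ^ (γ - 1)) * A) :=
      (eventually_gt_nhds hx).mono fun x' hx' => hzx_all x' hx' s t
    have hd : HasDerivAt (fun x' : ℝ => ϖ * (γ * x' ^ (γ - 1)) * A)
        (ϖ * (γ * ((γ - 1) * x ^ (γ - 1 - 1))) * A) x :=
      (((Real.hasDerivAt_rpow_const (Or.inl hx.ne')).const_mul γ).const_mul ϖ).mul_const A
    have : zxx x s t = ϖ * (γ * ((γ - 1) * x ^ (γ - 1 - 1))) * A := by
      show deriv (fun x' => zx x' s t) x = _
      rw [hev.deriv_eq]; exact hd.deriv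
    rw [this, show γ - 1 - 1 = γ - 2 by ring, hx2]
  have hneg : zxx x s t < 0 := by
    rw [hzxx, show ϖ * (γ * ((γ - 1) * (x ^ γ / x / x))) * A
      = (γ - 1) * (ϖ * γ * (x ^ γ / x / x) * A) by ring]
    apply mul_neg_of_neg_of_pos (by linarith)
    positivity
  -- derivative in s of the exponent
  have hEs : ∀ s' : ℝ, HasDerivAt (fun u => u ^ 2 * g t / 2 + Y u t)
      (s' * g t + deriv (fun u => Y u t) s') s' := by
    intro s'
    have h1 : HasDerivAt (fun u : ℝ => u ^ 2 * g t / 2) (s' * g t) s' := by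
      have h2 := ((hasDerivAt_pow 2 s').mul_const (g t)).div_const 2
      convert h2 using 1
      · rfl
      · rfl
      push_cast; ring
    exact h1.add (hY1 t ht s').hasDerivAt
  have hzs_all : ∀ s' : ℝ, zs x s' t =
      ϖ * x ^ γ * (Real.exp (s' ^ 2 * g t / 2 + Y s' t) *
        (s' * g t + deriv (fun u => Y u t) s')) := by
    intro s'
    exact (((hEs s').exp).const_mul (ϖ * x ^ γ)).deriv
  have hzs : zs x s t = ϖ * x ^ γ * (A * (s * G + Ys)) := hzs_all s
  -- second derivative in s
  have hzss : zss x s t = ϖ * x ^ γ *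
      (A * ((s * G + Ys) ^ 2 + (G + Yss))) := by
    have hfun : (fun s' => zs x s' t) = (fun s' =>
        ϖ * x ^ γ * (Real.exp (s' ^ 2 * g t / 2 + Y s' t) *
          (s' * g t + deriv (fun u => Y u t) s'))) := funext hzs_all
    have hd2 : HasDerivAt (fun s' : ℝ => s' * g t + deriv (fun u => Y u t) s')
        (1 * g t + Yss) s :=
      ((hasDerivAt_id s).mul_const (g t)).add (hY2 t ht s).hasDerivAt
    have hd : HasDerivAt (fun s' =>
        Real.exp (s' ^ 2 * g t / 2 + Y s' t) * (s' * g t + deriv (fun u => Y u t) s'))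
        (A * (s * G + Ys) * (s * g t + deriv (fun u => Y u t) s) + A * (1 * g t + Yss)) s :=
      ((hEs s).exp).mul hd2
    have : zss x s t = ϖ * x ^ γ *
        (A * (s * G + Ys) * (s * g t + deriv (fun u => Y u t) s) + A * (1 * g t + Yss)) := by
      show deriv (fun s' => zs x s' t) s = _
      rw [hfun]
      exact (hd.const_mul (ϖ * x ^ γ)).deriv
    rw [this, ← hYsdef, ← hGdef]; ring
  -- mixed derivative
  have hzxs : zxs x s t = ϖ * (γ * (x ^ γ / x)) * (A * (s * G + Ys)) := by
    have hfun : (fun s' => zx x s' t) = (fun s' =>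
        ϖ * (γ * x ^ (γ - 1)) * Real.exp (s' ^ 2 * g t / 2 + Y s' t)) :=
      funext fun s' => hzx_all x hx s' t
    have : zxs x s t = ϖ * (γ * x ^ (γ - 1)) *
        (A * (s * g t + deriv (fun u => Y u t) s)) := by
      show deriv (fun s' => zx x s' t) s = _
      rw [hfun]
      exact (((hEs s).exp).const_mul (ϖ * (γ * x ^ (γ - 1)))).deriv
    rw [this, hx1, ← hYsdef, ← hGdef]
  -- derivative in t
  have hzt : zt x s t = ϖ * x ^ γ * (A *
      (s ^ 2 * (2 * (γ * (κ + r) / (1 - γ) + κ) * G - σ ^ 2 / (1 - γ) * G ^ 2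
        - γ * (κ + r) ^ 2 / ((1 - γ) * σ ^ 2)) / 2 + Yt)) := by
    have h1 : HasDerivAt (fun t' => s ^ 2 * g t' / 2 + Y s t')
        (s ^ 2 * (2 * gam2 κ σ r γ * g t - gam1 σ γ * g t ^ 2 - gam3 κ σ r γ) / 2 + Yt) t := by
      have h2 := (((hg t ht).const_mul (s ^ 2)).div_const 2).add (hYt s t ht).hasDerivAt
      exact h2
    calc zt x s t = ϖ * x ^ γ * (A *
        (s ^ 2 * (2 * gam2 κ σ r γ * G - gam1 σ γ * G ^ 2 - gam3 κ σ r γ) / 2 + Yt)) :=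
          ((h1.exp).const_mul (ϖ * x ^ γ)).deriv
      _ = _ := by simp only [gam1, gam2, gam3]
  refine ⟨hneg, ?_, ?_⟩
  · -- the HJB equation
    have key : s ^ 2 * (2 * (γ * (κ + r) / (1 - γ) + κ) * G - σ ^ 2 / (1 - γ) * G ^ 2
          - γ * (κ + r) ^ 2 / ((1 - γ) * σ ^ 2)) / 2 + Yt
        + γ * (σ ^ 2 * (s * G + Ys) - (κ + r) * s) ^ 2 / (2 * σ ^ 2 * (1 - γ))
        + σ ^ 2 / 2 * ((s * G + Ys) ^ 2 + G + Yss) + r * γ - κ * (s * (s * G + Ys))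
        + (1 - γ) * (ϖ ^ (1 / (γ - 1)) * Real.exp (-E / (1 - γ))) = 0 := by
      have hp := hPDE s t ht
      simp only [gam1, gam2, gam3, ← hGdef, ← hYsdef, ← hYssdef, ← hYtdef] at hp
      rw [hEdef]
      linear_combination (norm := skip) hp
      field_simp
      ring
    -- the power term
    have hpow : (zx x s t / γ) ^ (γ / (γ - 1)) =
        ϖ * ϖ ^ (1 / (γ - 1)) * x ^ γ * (A * Real.exp (-E / (1 - γ))) := by
      have hb : zx x s t / γ = ϖ * x ^ (γ - 1) * A := by
        rw [hzx, hx1]; field_simp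
      have hϖp : ϖ ^ (γ / (γ - 1)) = ϖ * ϖ ^ (1 / (γ - 1)) := by
        rw [show γ / (γ - 1) = 1 + 1 / (γ - 1) by field_simp; ring, Real.rpow_add hϖ,
          Real.rpow_one]
      have hxp : (x ^ (γ - 1)) ^ (γ / (γ - 1)) = x ^ γ := by
        rw [← Real.rpow_mul hx.le]
        congr 1
        field_simp
      have hAp : A ^ (γ / (γ - 1)) = A * Real.exp (-E / (1 - γ)) := by
        rw [hAdef, ← Real.exp_mul, ← Real.exp_add]
        congr 1
        field_simp
        ring
      rw [hb, Real.mul_rpow (by positivity) hApos.le,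
        Real.mul_rpow hϖ.le (Real.rpow_nonneg hx.le _), hϖp, hxp, hAp]
    have hAne : A ≠ 0 := hApos.ne'
    have main : ϖ * x ^ γ * (A *
          (s ^ 2 * (2 * (γ * (κ + r) / (1 - γ) + κ) * G - σ ^ 2 / (1 - γ) * G ^ 2
            - γ * (κ + r) ^ 2 / ((1 - γ) * σ ^ 2)) / 2 + Yt)) +
        (σ ^ 2 * (ϖ * (γ * (x ^ γ / x)) * (A * (s * G + Ys))) -
            (κ + r) * s * (ϖ * (γ * (x ^ γ / x)) * A)) ^ 2 /
          (2 * σ ^ 2 * -(ϖ * (γ * ((γ - 1) * (x ^ γ / x / x))) * A)) +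
        σ ^ 2 / 2 * (ϖ * x ^ γ * (A * ((s * G + Ys) ^ 2 + (G + Yss)))) +
        r * x * (ϖ * (γ * (x ^ γ / x)) * A) -
        κ * s * (ϖ * x ^ γ * (A * (s * G + Ys))) +
        (1 - γ) * (ϖ * ϖ ^ (1 / (γ - 1)) * x ^ γ * (A * Real.exp (-E / (1 - γ)))) =
        ϖ * x ^ γ * A *
          (s ^ 2 * (2 * (γ * (κ + r) / (1 - γ) + κ) * G - σ ^ 2 / (1 - γ) * G ^ 2
              - γ * (κ + r) ^ 2 / ((1 - γ) * σ ^ 2)) / 2 + Yt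
            + γ * (σ ^ 2 * (s * G + Ys) - (κ + r) * s) ^ 2 / (2 * σ ^ 2 * (1 - γ))
            + σ ^ 2 / 2 * ((s * G + Ys) ^ 2 + G + Yss) + r * γ - κ * (s * (s * G + Ys))
            + (1 - γ) * (ϖ ^ (1 / (γ - 1)) * Real.exp (-E / (1 - γ)))) := by
      field_simp
      ring
    rw [hzt, hzxs, hpow, hzx, hzss, hzs, abs_of_neg hneg, hzxx, main, key, mul_zero]
  · -- terminal condition
    show ϖ * x ^ γ * Real.exp (s ^ 2 * g T / 2 + Y s T) = ϖ * x ^ γ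
    rw [hgT, hYT]
    simp
end
end
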